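/- Let (𝔤,𝔨) be a symmetric pair with 𝔭 the (−1)-eigenspace. In the noncommutative Weil algebra W̃(𝔤), the algebra map ψ_rel : W̃(𝔤) → ℂ[t,dt] ⊗ W̃(𝔤) determined on degree-1 generators by ψ_rel(μ) = 1⊗μ − t⊗μ_𝔭 (where μ = μ_𝔨 + μ_𝔭 is the decomposition along 𝔤* = 𝔨* ⊕ 𝔭*) and extended as a morphism of differential algebras satisfies: for μ ∈ 𝔨*, ψ_rel(μ̂) = 1⊗μ̂ + (2t − t²)⊗δ_𝔭(μ), and for μ ∈ 𝔭*, ψ_rel(μ̂) = (1−t)⊗μ̂ − dt⊗μ. -/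

import Mathlib

section Aux

variable {G : Type*} [LieRing G] [LieAlgebra ℂ G] {ιI : Type*} [Fintype ιI]
  {W : Type*} [Ring W] [Algebra ℂ W]

/-- `μ⁅·,·⁆` as a bilinear map. -/
noncomputable def brForm (μ : Module.Dual ℂ G) : G →ₗ[ℂ] G →ₗ[ℂ] ℂ :=
  LinearMap.mk₂ ℂ (fun x y => μ ⁅x, y⁆)
    (fun x x' y => by simp [add_lie]) (fun r x y => by simp [smul_lie])
    (fun x y y' => by simp [lie_add]) (fun r x y => by simp [lie_smul])

@[simp] lemma brForm_apply (μ : Module.Dual ℂ G) (x y : G) :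
    brForm μ x y = μ ⁅x, y⁆ := rfl

lemma aux_sum_left (b : Module.Basis ιI ℂ G) (μ : Module.Dual ℂ G) (x y : G) :
    ∑ a, b.coord a x • μ ⁅b a, y⁆ = μ ⁅x, y⁆ := by
  have h := map_sum ((brForm μ).flip y) (fun a => b.coord a x • b a) Finset.univ
  have h2 : (∑ a, b.coord a x • b a) = x := by
    simpa [Module.Basis.coord_apply] using b.sum_repr x
  rw [h2] at h
  simpa [map_smul] using h.symm

lemma aux_sum_right (b : Module.Basis ιI ℂ G) (μ : Module.Dual ℂ G) (x y : G) :
    ∑ c, b.coord c y • μ ⁅x, b c⁆ = μ ⁅x, y⁆ := by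
  have h := map_sum ((brForm μ) x) (fun c => b.coord c y • b c) Finset.univ
  have h2 : (∑ c, b.coord c y • b c) = y := by
    simpa [Module.Basis.coord_apply] using b.sum_repr y
  rw [h2] at h
  simpa [map_smul] using h.symm

lemma aux_coord_comp (b : Module.Basis ιI ℂ G) (A : G →ₗ[ℂ] G) (ν : Module.Dual ℂ G) :
    ν ∘ₗ A = ∑ d, ν (A (b d)) • b.coord d := by
  classical
  refine b.ext fun e => ?_
  have hs : ∀ x : ιI, ((Finsupp.single e (1 : ℂ)) x) = if e = x then 1 else 0 :=
    fun x => Finsupp.single_apply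
  simp [LinearMap.sum_apply, Module.Basis.coord_apply, Module.Basis.repr_self, hs, Finset.sum_ite_eq]

lemma aux_Lleft (b : Module.Basis ιI ℂ G) (μ : Module.Dual ℂ G)
    (F : Module.Dual ℂ G →ₗ[ℂ] W) (A : G →ₗ[ℂ] G) (y : G) (w : W) :
    ∑ a, μ ⁅b a, y⁆ • (F (b.coord a ∘ₗ A) * w)
      = ∑ a, μ ⁅A (b a), y⁆ • (F (b.coord a) * w) := by
  have expand : ∀ a, F (b.coord a ∘ₗ A) = ∑ d, b.coord a (A (b d)) • F (b.coord d) := by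
    intro a
    rw [aux_coord_comp b A (b.coord a), map_sum]
    simp [map_smul]
  calc ∑ a, μ ⁅b a, y⁆ • (F (b.coord a ∘ₗ A) * w)
      = ∑ a, ∑ d, (b.coord a (A (b d)) • μ ⁅b a, y⁆) • (F (b.coord d) * w) := by
        refine Finset.sum_congr rfl fun a _ => ?_
        rw [expand a, Finset.sum_mul, Finset.smul_sum]
        refine Finset.sum_congr rfl fun d _ => ?_
        rw [smul_mul_assoc, smul_smul, smul_eq_mul, mul_comm]
    _ = ∑ d, (∑ a, b.coord a (A (b d)) • μ ⁅b a, y⁆) • (F (b.coord d) * w) := by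
        rw [Finset.sum_comm]
        simp [Finset.sum_smul]
    _ = ∑ d, μ ⁅A (b d), y⁆ • (F (b.coord d) * w) := by
        refine Finset.sum_congr rfl fun d _ => ?_
        rw [aux_sum_left b μ (A (b d)) y]

lemma aux_Lright (b : Module.Basis ιI ℂ G) (μ : Module.Dual ℂ G)
    (F : Module.Dual ℂ G →ₗ[ℂ] W) (B : G →ₗ[ℂ] G) (x : G) (w : W) :
    ∑ c, μ ⁅x, b c⁆ • (w * F (b.coord c ∘ₗ B))
      = ∑ c, μ ⁅x, B (b c)⁆ • (w * F (b.coord c)) := by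
  have expand : ∀ c, F (b.coord c ∘ₗ B) = ∑ d, b.coord c (B (b d)) • F (b.coord d) := by
    intro c
    rw [aux_coord_comp b B (b.coord c), map_sum]
    simp [map_smul]
  calc ∑ c, μ ⁅x, b c⁆ • (w * F (b.coord c ∘ₗ B))
      = ∑ c, ∑ d, (b.coord c (B (b d)) • μ ⁅x, b c⁆) • (w * F (b.coord d)) := by
        refine Finset.sum_congr rfl fun c _ => ?_
        rw [expand c, Finset.mul_sum, Finset.smul_sum]
        refine Finset.sum_congr rfl fun d _ => ?_
        rw [mul_smul_comm, smul_smul, smul_eq_mul, mul_comm]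
    _ = ∑ d, (∑ c, b.coord c (B (b d)) • μ ⁅x, b c⁆) • (w * F (b.coord d)) := by
        rw [Finset.sum_comm]
        simp [Finset.sum_smul]
    _ = ∑ d, μ ⁅x, B (b d)⁆ • (w * F (b.coord d)) := by
        refine Finset.sum_congr rfl fun d _ => ?_
        rw [aux_sum_right b μ x (B (b d))]

/-- Key reindexing: inserting compositions in the generators equals inserting maps in the
bracket. -/
lemma aux_key (b : Module.Basis ιI ℂ G) (μ : Module.Dual ℂ G)
    (F : Module.Dual ℂ G →ₗ[ℂ] W) (A B : G →ₗ[ℂ] G) :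
    ∑ a, ∑ c, μ ⁅b a, b c⁆ • (F (b.coord a ∘ₗ A) * F (b.coord c ∘ₗ B))
      = ∑ a, ∑ c, μ ⁅A (b a), B (b c)⁆ • (F (b.coord a) * F (b.coord c)) := by
  calc ∑ a, ∑ c, μ ⁅b a, b c⁆ • (F (b.coord a ∘ₗ A) * F (b.coord c ∘ₗ B))
      = ∑ a, ∑ c, μ ⁅b a, B (b c)⁆ • (F (b.coord a ∘ₗ A) * F (b.coord c)) := by
        exact Finset.sum_congr rfl fun a _ => aux_Lright b μ F B (b a) _
    _ = ∑ c, ∑ a, μ ⁅b a, B (b c)⁆ • (F (b.coord a ∘ₗ A) * F (b.coord c)) :=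
        Finset.sum_comm
    _ = ∑ c, ∑ a, μ ⁅A (b a), B (b c)⁆ • (F (b.coord a) * F (b.coord c)) := by
        exact Finset.sum_congr rfl fun c _ => aux_Lleft b μ F A (B (b c)) _
    _ = ∑ a, ∑ c, μ ⁅A (b a), B (b c)⁆ • (F (b.coord a) * F (b.coord c)) :=
        Finset.sum_comm

lemma aux_expand_prod {W : Type*} [Ring W] (t : W) (ht : ∀ z : W, Commute t z)
    (x y z w : W) :
    (x - t * y) * (z - t * w) = x * z - t * (x * w) - t * (y * z) + t ^ 2 * (y * w) := by
  have hxw : x * (t * w) = t * (x * w) := by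
    rw [← mul_assoc, ← (ht x).eq, mul_assoc]
  have hyw : t * y * (t * w) = t ^ 2 * (y * w) := by
    rw [mul_assoc t y, ← mul_assoc y t w, ← (ht y).eq, ← mul_assoc, ← mul_assoc, sq,
      mul_assoc (t * t)]
  rw [sub_mul, mul_sub, mul_sub, hxw, hyw, mul_assoc t y z]
  abel

end Aux



/-- The noncommutative Weil algebra `W̃(𝔤) = T(𝔤*[-2] ⊕ 𝔤*[-1])`, realized as the tensor
algebra on `𝔤* × 𝔤*`. -/
noncomputable abbrev WeilNC (G : Type*) [AddCommGroup G] [Module ℂ G] :=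
  TensorAlgebra ℂ (Module.Dual ℂ G × Module.Dual ℂ G)

/-- The degree-1 generator `μ ∈ 𝔤*[-1]` of `W̃(𝔤)`. -/
noncomputable def gen1 {G : Type*} [AddCommGroup G] [Module ℂ G]
    (μ : Module.Dual ℂ G) : WeilNC G :=
  TensorAlgebra.ι ℂ (μ, 0)

/-- The degree-2 generator `μ̄ ∈ 𝔤*[-2]` of `W̃(𝔤)`. -/
noncomputable def gen2 {G : Type*} [AddCommGroup G] [Module ℂ G]
    (μ : Module.Dual ℂ G) : WeilNC G :=
  TensorAlgebra.ι ℂ (0, μ)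

/-- For a projection `π` of `𝔤`, the element
`-(1/2) ∑_{a,c} μ([π e_a, π e_c]) • f_a ⊗ f_c ∈ T²(𝔤*[-1]) ⊂ W̃(𝔤)`.
For `π = id` this is `δ_𝔤(μ)`; for `π = π_𝔭` (projection onto `𝔭` along `𝔨` in a symmetric
pair `𝔤 = 𝔨 ⊕ 𝔭`) and `μ ∈ 𝔨*` this is the component `δ_𝔭(μ) ∈ T²(𝔭*[-1])`. -/
noncomputable def deltaWith {G : Type*} [LieRing G] [LieAlgebra ℂ G]
    (π : G →ₗ[ℂ] G) {ιI : Type*} [Fintype ιI] (b : Module.Basis ιI ℂ G)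
    (μ : Module.Dual ℂ G) : WeilNC G :=
  (-(1 : ℂ) / 2) • ∑ a, ∑ c, μ ⁅π (b a), π (b c)⁆ •
    (gen1 (b.coord a) * gen1 (b.coord c))

/-- Let `(𝔤,𝔨)` be a symmetric pair, `𝔤 = 𝔨 ⊕ 𝔭` (encoded by complementary
projections `πk`, `πp` with `[𝔨,𝔨] ⊆ 𝔨`, `[𝔨,𝔭] ⊆ 𝔭`, `[𝔭,𝔭] ⊆ 𝔨`).  Let `ψ_rel` be the
algebra morphism `W̃(𝔤) → ℂ[t,dt] ⊗ W̃(𝔤)` (the target is `W`, with `1 ⊗ -` given by the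
algebra map `inc`, and central even element `t` and odd element `dt`) determined on degree-1
generators by `ψ_rel(μ) = 1⊗μ - t⊗μ_𝔭`, extended as a morphism of differential algebras (so
`ψ_rel(μ̄) = 1⊗μ̄ - dt⊗μ_𝔭 - t⊗μ̄_𝔭`).  Then, on the curvature generators `μ̂ = μ̄ - δ_𝔤(μ)`:
for `μ ∈ 𝔨*`, `ψ_rel(μ̂) = 1 ⊗ μ̂ + (2t - t²) ⊗ δ_𝔭(μ)`, and
for `μ ∈ 𝔭*`, `ψ_rel(μ̂) = (1 - t) ⊗ μ̂ - dt ⊗ μ`. -/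

@[simp] lemma gen1_zero {G : Type*} [AddCommGroup G] [Module ℂ G] :
    gen1 (0 : Module.Dual ℂ G) = 0 := by
  show TensorAlgebra.ι ℂ ((0 : Module.Dual ℂ G × Module.Dual ℂ G)) = 0
  exact map_zero _

@[simp] lemma gen2_zero {G : Type*} [AddCommGroup G] [Module ℂ G] :
    gen2 (0 : Module.Dual ℂ G) = 0 := by
  show TensorAlgebra.ι ℂ ((0 : Module.Dual ℂ G × Module.Dual ℂ G)) = 0
  exact map_zero _

section Main

theorem stmt13 (G : Type*) [LieRing G] [LieAlgebra ℂ G]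
    (πk πp : G →ₗ[ℂ] G)
    (hsum : πk + πp = LinearMap.id)
    (hortho : πk ∘ₗ πp = 0) (hortho' : πp ∘ₗ πk = 0)
    (hkk : ∀ x y : G, πp ⁅πk x, πk y⁆ = 0)
    (hkp : ∀ x y : G, πk ⁅πk x, πp y⁆ = 0)
    (hpk : ∀ x y : G, πk ⁅πp x, πk y⁆ = 0)
    (hpp : ∀ x y : G, πp ⁅πp x, πp y⁆ = 0)
    (ιI : Type*) [Fintype ιI] (b : Module.Basis ιI ℂ G)
    (W : Type*) [Ring W] [Algebra ℂ W]
    (t dt : W) (inc : WeilNC G →ₐ[ℂ] W)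
    (ht : ∀ z : W, Commute t z)
    (ψ : WeilNC G →ₐ[ℂ] W)
    (hψ1 : ∀ μ : Module.Dual ℂ G,
      ψ (gen1 μ) = inc (gen1 μ) - t * inc (gen1 (μ ∘ₗ πp)))
    (hψ2 : ∀ μ : Module.Dual ℂ G,
      ψ (gen2 μ) = inc (gen2 μ) - dt * inc (gen1 (μ ∘ₗ πp)) - t * inc (gen2 (μ ∘ₗ πp)))
    (μ : Module.Dual ℂ G) :
    (μ ∘ₗ πp = 0 →
      ψ (gen2 μ - deltaWith LinearMap.id b μ) =
        inc (gen2 μ - deltaWith LinearMap.id b μ) +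
          (2 * t - t ^ 2) * inc (deltaWith πp b μ)) ∧
    (μ ∘ₗ πk = 0 →
      ψ (gen2 μ - deltaWith LinearMap.id b μ) =
        (1 - t) * inc (gen2 μ - deltaWith LinearMap.id b μ) - dt * inc (gen1 μ)) := by
  classical
  have hid : ∀ z : G, πk z + πp z = z := fun z => by
    simpa using LinearMap.congr_fun hsum z
  set F : Module.Dual ℂ G →ₗ[ℂ] W :=
    inc.toLinearMap ∘ₗ ((TensorAlgebra.ι ℂ).comp
      (LinearMap.inl ℂ (Module.Dual ℂ G) (Module.Dual ℂ G))) with hFdef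
  have hF : ∀ ν : Module.Dual ℂ G, F ν = inc (gen1 ν) := fun ν => rfl
  set T1 : W := ∑ a, ∑ c, μ ⁅b a, b c⁆ • (F (b.coord a) * F (b.coord c)) with hT1
  set T2 : W := ∑ a, ∑ c, μ ⁅b a, πp (b c)⁆ • (F (b.coord a) * F (b.coord c)) with hT2
  set T3 : W := ∑ a, ∑ c, μ ⁅πp (b a), b c⁆ • (F (b.coord a) * F (b.coord c)) with hT3
  set T4 : W := ∑ a, ∑ c, μ ⁅πp (b a), πp (b c)⁆ • (F (b.coord a) * F (b.coord c)) with hT4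
  have hD : inc (deltaWith LinearMap.id b μ) = (-(1 : ℂ)/2) • T1 := by
    rw [hT1]
    simp only [deltaWith, map_smul, map_sum, map_mul, LinearMap.id_coe, id_eq, ← hF]
  have hP : inc (deltaWith πp b μ) = (-(1 : ℂ)/2) • T4 := by
    rw [hT4]
    simp only [deltaWith, map_smul, map_sum, map_mul, ← hF]
  have hψδ : ψ (deltaWith LinearMap.id b μ)
      = (-(1 : ℂ)/2) • (T1 - t * T2 - t * T3 + t ^ 2 * T4) := by
    have hterm : ∀ a c : ιI,
        ψ (gen1 (b.coord a)) * ψ (gen1 (b.coord c))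
          = F (b.coord a) * F (b.coord c)
            - t * (F (b.coord a) * F (b.coord c ∘ₗ πp))
            - t * (F (b.coord a ∘ₗ πp) * F (b.coord c))
            + t ^ 2 * (F (b.coord a ∘ₗ πp) * F (b.coord c ∘ₗ πp)) := by
      intro a c
      rw [hψ1, hψ1]
      simp only [← hF]
      exact aux_expand_prod t ht _ _ _ _
    have k2 := aux_key b μ F LinearMap.id πp
    have k3 := aux_key b μ F πp LinearMap.id
    have k4 := aux_key b μ F πp πp
    simp only [LinearMap.comp_id, LinearMap.id_coe, id_eq] at k2 k3
    calc ψ (deltaWith LinearMap.id b μ)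
        = (-(1 : ℂ)/2) • ∑ a, ∑ c, μ ⁅b a, b c⁆ •
            (ψ (gen1 (b.coord a)) * ψ (gen1 (b.coord c))) := by
          simp only [deltaWith, map_smul, map_sum, map_mul, LinearMap.id_coe, id_eq]
      _ = (-(1 : ℂ)/2) • ∑ a, ∑ c,
            (μ ⁅b a, b c⁆ • (F (b.coord a) * F (b.coord c))
              - t * (μ ⁅b a, b c⁆ • (F (b.coord a) * F (b.coord c ∘ₗ πp)))
              - t * (μ ⁅b a, b c⁆ • (F (b.coord a ∘ₗ πp) * F (b.coord c)))
              + t ^ 2 * (μ ⁅b a, b c⁆ • (F (b.coord a ∘ₗ πp) * F (b.coord c ∘ₗ πp)))) := by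
          congr 1
          refine Finset.sum_congr rfl fun a _ => Finset.sum_congr rfl fun c _ => ?_
          rw [hterm a c, smul_add, smul_sub, smul_sub, mul_smul_comm, mul_smul_comm,
            mul_smul_comm]
      _ = (-(1 : ℂ)/2) • ((∑ a, ∑ c, μ ⁅b a, b c⁆ • (F (b.coord a) * F (b.coord c)))
            - t * ∑ a, ∑ c, μ ⁅b a, b c⁆ • (F (b.coord a) * F (b.coord c ∘ₗ πp))
            - t * ∑ a, ∑ c, μ ⁅b a, b c⁆ • (F (b.coord a ∘ₗ πp) * F (b.coord c))
            + t ^ 2 * ∑ a, ∑ c, μ ⁅b a, b c⁆ •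
                (F (b.coord a ∘ₗ πp) * F (b.coord c ∘ₗ πp))) := by
          congr 1
          simp only [Finset.sum_add_distrib, Finset.sum_sub_distrib, Finset.mul_sum]
      _ = (-(1 : ℂ)/2) • (T1 - t * T2 - t * T3 + t ^ 2 * T4) := by
          rw [k2, k3, k4, hT1, hT2, hT3, hT4]
  constructor
  · -- case μ ∈ 𝔨*
    intro hμp
    have hμp' : ∀ z : G, μ (πp z) = 0 := fun z => by
      simpa using LinearMap.congr_fun hμp z
    have l2 : ∀ x y : G, μ ⁅x, πp y⁆ = μ ⁅πp x, πp y⁆ := by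
      intro x y
      have h0 : μ ⁅πk x, πp y⁆ = 0 := by
        calc μ ⁅πk x, πp y⁆
            = μ (πk ⁅πk x, πp y⁆) + μ (πp ⁅πk x, πp y⁆) := by rw [← map_add, hid]
          _ = 0 := by rw [hkp, map_zero, hμp', zero_add]
      have hb : ⁅x, πp y⁆ = ⁅πk x, πp y⁆ + ⁅πp x, πp y⁆ := by rw [← add_lie, hid]
      rw [hb, map_add, h0, zero_add]
    have l3 : ∀ x y : G, μ ⁅πp x, y⁆ = μ ⁅πp x, πp y⁆ := by
      intro x y
      have h0 : μ ⁅πp x, πk y⁆ = 0 := by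
        calc μ ⁅πp x, πk y⁆
            = μ (πk ⁅πp x, πk y⁆) + μ (πp ⁅πp x, πk y⁆) := by rw [← map_add, hid]
          _ = 0 := by rw [hpk, map_zero, hμp', zero_add]
      have hb : ⁅πp x, y⁆ = ⁅πp x, πk y⁆ + ⁅πp x, πp y⁆ := by rw [← lie_add, hid]
      rw [hb, map_add, h0, zero_add]
    have hT2e : T2 = T4 := by
      rw [hT2, hT4]
      exact Finset.sum_congr rfl fun a _ => Finset.sum_congr rfl fun c _ => by rw [l2]
    have hT3e : T3 = T4 := by
      rw [hT3, hT4]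
      exact Finset.sum_congr rfl fun a _ => Finset.sum_congr rfl fun c _ => by rw [l3]
    have hg2 : ψ (gen2 μ) = inc (gen2 μ) := by
      rw [hψ2, hμp]
      simp
    rw [map_sub, map_sub, hg2, hψδ, hD, hP, hT2e, hT3e, mul_smul_comm]
    have hexp : (2 * t - t ^ 2) * T4 = t * T4 + t * T4 - t ^ 2 * T4 := by
      rw [sub_mul, two_mul, add_mul]
    rw [hexp]
    module
  · -- case μ ∈ 𝔭*
    intro hμk
    have hμk' : ∀ z : G, μ (πk z) = 0 := fun z => by
      simpa using LinearMap.congr_fun hμk z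
    have hper : μ ∘ₗ πp = μ := by
      ext z
      have h := hid z
      simp only [LinearMap.comp_apply]
      conv_rhs => rw [← h]
      rw [map_add, hμk', zero_add]
    have m1 : ∀ x y : G, μ ⁅πp x, πp y⁆ = 0 := by
      intro x y
      calc μ ⁅πp x, πp y⁆
          = μ (πk ⁅πp x, πp y⁆) + μ (πp ⁅πp x, πp y⁆) := by rw [← map_add, hid]
        _ = 0 := by rw [hpp, map_zero, hμk', add_zero]
    have m2 : ∀ x y : G, μ ⁅x, πp y⁆ + μ ⁅πp x, y⁆ = μ ⁅x, y⁆ := by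
      intro x y
      have e0 : μ ⁅πk x, πk y⁆ = 0 := by
        calc μ ⁅πk x, πk y⁆
            = μ (πk ⁅πk x, πk y⁆) + μ (πp ⁅πk x, πk y⁆) := by rw [← map_add, hid]
          _ = 0 := by rw [hkk, map_zero, hμk', add_zero]
      have e1 : μ ⁅x, πp y⁆ = μ ⁅πk x, πp y⁆ := by
        conv_lhs => rw [← hid x]
        rw [add_lie, map_add, m1, add_zero]
      have e2 : μ ⁅πp x, y⁆ = μ ⁅πp x, πk y⁆ := by
        conv_lhs => rw [← hid y]
        rw [lie_add, map_add, m1, add_zero]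
      rw [e1, e2]
      conv_rhs => rw [← hid x, ← hid y]
      rw [add_lie, lie_add, lie_add, map_add, map_add, map_add, e0, m1]
      ring
    have hT4z : T4 = 0 := by
      rw [hT4]
      exact Finset.sum_eq_zero fun a _ => Finset.sum_eq_zero fun c _ => by
        rw [m1, zero_smul]
    have hT23 : T2 + T3 = T1 := by
      rw [hT1, hT2, hT3, ← Finset.sum_add_distrib]
      refine Finset.sum_congr rfl fun a _ => ?_
      rw [← Finset.sum_add_distrib]
      refine Finset.sum_congr rfl fun c _ => ?_
      rw [← add_smul, m2]
    have hψδ2 : ψ (deltaWith LinearMap.id b μ)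
        = inc (deltaWith LinearMap.id b μ) - (-(1 : ℂ)/2) • (t * T1) := by
      rw [hψδ, hD, hT4z, mul_zero, add_zero, sub_sub, ← mul_add, hT23, smul_sub]
    have htD : t * inc (deltaWith LinearMap.id b μ) = (-(1 : ℂ)/2) • (t * T1) := by
      rw [hD, mul_smul_comm]
    rw [map_sub, hψ2 μ, hper, hψδ2, map_sub, sub_mul, one_mul, mul_sub, htD]
    abel

end Main
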